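/- For every m ∈ ℕ₀ and every t ∈ ℝ, the integral ∫_ℝ e^{−(t−τ)²} e^{−τ²/2} H_m(τ) dτ converges and equals √(2π/3) · 3^{−m/2} · e^{−t²/3} · H_m(2t/√3). -/

import Mathlib

open Real Finset MeasureTheory

/-- The `m`-th physicists' Hermite polynomial
`H_m(x) = m! ∑_{k=0}^{⌊m/2⌋} ((−1)^k/(k!(m−2k)!)) (2x)^{m−2k}`. -/
noncomputable def hermitePoly (m : ℕ) (x : ℝ) : ℝ :=
  (Nat.factorial m : ℝ) *
    ∑ k ∈ Finset.range (m / 2 + 1),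
      (-1) ^ k / ((Nat.factorial k : ℝ) * (Nat.factorial (m - 2 * k) : ℝ)) *
        (2 * x) ^ (m - 2 * k)

open Filter

lemma hermitePoly_zero (x : ℝ) : hermitePoly 0 x = 1 := by
  simp [hermitePoly]

lemma hermitePoly_one (x : ℝ) : hermitePoly 1 x = 2 * x := by
  simp [hermitePoly]

lemma hermitePoly_hasDerivAt (m : ℕ) (x : ℝ) :
    HasDerivAt (hermitePoly (m + 1)) (2 * (m + 1) * hermitePoly m x) x := by
  have h2y : HasDerivAt (fun y : ℝ => 2 * y) 2 x := by
    simpa using (hasDerivAt_id x).const_mul 2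
  have h : ∀ k ∈ Finset.range ((m + 1) / 2 + 1), HasDerivAt
      (fun y : ℝ => (-1) ^ k / ((Nat.factorial k : ℝ) *
          (Nat.factorial (m + 1 - 2 * k) : ℝ)) * (2 * y) ^ (m + 1 - 2 * k))
      ((-1) ^ k / ((Nat.factorial k : ℝ) * (Nat.factorial (m + 1 - 2 * k) : ℝ)) *
        ((m + 1 - 2 * k : ℕ) * (2 * x) ^ (m + 1 - 2 * k - 1) * 2)) x := by
    intro k _
    exact ((hasDerivAt_pow (m + 1 - 2 * k) (2 * x)).comp x h2y).const_mul _
  have key : ((Nat.factorial (m + 1) : ℝ)) *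
      ∑ k ∈ Finset.range ((m + 1) / 2 + 1),
        (-1) ^ k / ((Nat.factorial k : ℝ) * (Nat.factorial (m + 1 - 2 * k) : ℝ)) *
          ((m + 1 - 2 * k : ℕ) * (2 * x) ^ (m + 1 - 2 * k - 1) * 2) =
      2 * (m + 1) * hermitePoly m x := by
    rw [hermitePoly]
    have hsub : Finset.range (m / 2 + 1) ⊆ Finset.range ((m + 1) / 2 + 1) := by
      intro a ha; simp only [Finset.mem_range] at *; omega
    rw [← Finset.sum_subset hsub (by
      intro k hk hk'
      simp only [Finset.mem_range] at hk hk'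
      have h0 : m + 1 - 2 * k = 0 := by omega
      rw [h0]; simp)]
    simp only [Finset.mul_sum]
    refine Finset.sum_congr rfl ?_
    intro k hk
    simp only [Finset.mem_range] at hk
    obtain ⟨n, rfl⟩ : ∃ n, m = 2 * k + n := ⟨m - 2 * k, by omega⟩
    simp only [show 2 * k + n + 1 - 2 * k = n + 1 from by omega,
      show 2 * k + n + 1 - 2 * k - 1 = n from by omega,
      show 2 * k + n - 2 * k = n from by omega]
    rw [Nat.factorial_succ n, Nat.factorial_succ (2 * k + n)]
    have h1 : ((Nat.factorial k : ℝ)) ≠ 0 := Nat.cast_ne_zero.mpr (Nat.factorial_ne_zero k)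
    have h2 : ((Nat.factorial n : ℝ)) ≠ 0 := Nat.cast_ne_zero.mpr (Nat.factorial_ne_zero n)
    push_cast
    field_simp
  have hD := (HasDerivAt.fun_sum h).const_mul ((Nat.factorial (m + 1) : ℝ))
  rw [key] at hD
  exact hD

lemma sum_rec_aux (j : ℕ) (A B D : ℕ → ℝ)
    (hAB0 : A 0 = B 0)
    (hlast : A (j + 1) = - D j)
    (hmid : ∀ k, k < j → A (k + 1) = B (k + 1) - D k) :
    ∑ k ∈ range (j + 2), A k = ∑ k ∈ range (j + 1), B k - ∑ k ∈ range (j + 1), D k := by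
  rw [show j + 2 = j + 1 + 1 from rfl, Finset.sum_range_succ' A (j + 1),
    Finset.sum_range_succ' B j, Finset.sum_range_succ (fun k => A (k + 1)) j,
    Finset.sum_range_succ D j]
  have h : ∑ k ∈ range j, A (k + 1) = ∑ k ∈ range j, (B (k + 1) - D k) :=
    Finset.sum_congr rfl fun k hk => hmid k (Finset.mem_range.mp hk)
  rw [h, Finset.sum_sub_distrib, hlast, hAB0]; ring

lemma sum_rec_aux' (j : ℕ) (A B D : ℕ → ℝ)
    (hAB0 : A 0 = B 0)
    (hmid : ∀ k, k ≤ j → A (k + 1) = B (k + 1) - D k) :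
    ∑ k ∈ range (j + 2), A k = ∑ k ∈ range (j + 2), B k - ∑ k ∈ range (j + 1), D k := by
  rw [show j + 2 = j + 1 + 1 from rfl, Finset.sum_range_succ' A (j + 1),
    Finset.sum_range_succ' B (j + 1)]
  have h : ∑ k ∈ range (j + 1), A (k + 1) = ∑ k ∈ range (j + 1), (B (k + 1) - D k) :=
    Finset.sum_congr rfl fun k hk => hmid k (by have := Finset.mem_range.mp hk; omega)
  rw [h, Finset.sum_sub_distrib, hAB0]; ring

lemma hermitePoly_rec (m : ℕ) (x : ℝ) :
    hermitePoly (m + 2) x = 2 * x * hermitePoly (m + 1) x - 2 * (m + 1) * hermitePoly m x := by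
  rcases Nat.even_or_odd m with ⟨j, rfl⟩ | ⟨j, rfl⟩
  · simp only [hermitePoly]
    simp only [show (j + j + 2) / 2 + 1 = j + 2 from by omega,
      show (j + j + 1) / 2 + 1 = j + 1 from by omega,
      show (j + j) / 2 + 1 = j + 1 from by omega]
    simp only [Finset.mul_sum]
    refine sum_rec_aux j _ _ _ ?_ ?_ ?_
    · simp only [Nat.mul_zero, Nat.sub_zero, pow_zero, Nat.factorial_zero]
      simp only [show j + j + 2 = j + j + 1 + 1 from rfl]
      simp only [Nat.factorial_succ]
      have h1 : ((Nat.factorial (j + j) : ℝ)) ≠ 0 := Nat.cast_ne_zero.mpr (Nat.factorial_ne_zero _)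
      push_cast
      field_simp
      ring
    · simp only [show j + j + 2 - 2 * (j + 1) = 0 from by omega,
        show j + j - 2 * j = 0 from by omega, pow_zero, Nat.factorial_zero]
      simp only [show j + j + 2 = j + j + 1 + 1 from rfl, show j + j + 1 = j + j + 1 from rfl]
      simp only [Nat.factorial_succ]
      have h1 : ((Nat.factorial (j + j) : ℝ)) ≠ 0 := Nat.cast_ne_zero.mpr (Nat.factorial_ne_zero _)
      have h2 : ((Nat.factorial j : ℝ)) ≠ 0 := Nat.cast_ne_zero.mpr (Nat.factorial_ne_zero _)
      push_cast
      field_simp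
      ring
    · intro k hk
      obtain ⟨d, rfl⟩ : ∃ d, j = k + d + 1 := ⟨j - k - 1, by omega⟩
      simp only [show k + d + 1 + (k + d + 1) + 2 - 2 * (k + 1) = 2 * d + 1 + 1 from by omega,
        show k + d + 1 + (k + d + 1) + 1 - 2 * (k + 1) = 2 * d + 1 from by omega,
        show k + d + 1 + (k + d + 1) - 2 * k = 2 * d + 1 + 1 from by omega]
      simp only [show k + d + 1 + (k + d + 1) + 2 = 2 * k + 2 * d + 2 + 1 + 1 from by omega,
        show k + d + 1 + (k + d + 1) + 1 = 2 * k + 2 * d + 2 + 1 from by omega,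
        show k + d + 1 + (k + d + 1) = 2 * k + 2 * d + 2 from by omega]
      simp only [Nat.factorial_succ]
      have h1 : ((Nat.factorial (2 * k + 2 * d + 2) : ℝ)) ≠ 0 :=
        Nat.cast_ne_zero.mpr (Nat.factorial_ne_zero _)
      have h2 : ((Nat.factorial k : ℝ)) ≠ 0 := Nat.cast_ne_zero.mpr (Nat.factorial_ne_zero _)
      have h3 : ((Nat.factorial (2 * d) : ℝ)) ≠ 0 := Nat.cast_ne_zero.mpr (Nat.factorial_ne_zero _)
      push_cast
      field_simp
      ring
  · simp only [hermitePoly]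
    simp only [show (2 * j + 1 + 2) / 2 + 1 = j + 2 from by omega,
      show (2 * j + 1 + 1) / 2 + 1 = j + 2 from by omega,
      show (2 * j + 1) / 2 + 1 = j + 1 from by omega]
    simp only [Finset.mul_sum]
    refine sum_rec_aux' j _ _ _ ?_ ?_
    · simp only [Nat.mul_zero, Nat.sub_zero, pow_zero, Nat.factorial_zero]
      simp only [show 2 * j + 1 + 2 = 2 * j + 1 + 1 + 1 from rfl]
      simp only [Nat.factorial_succ]
      have h1 : ((Nat.factorial (2 * j + 1) : ℝ)) ≠ 0 := Nat.cast_ne_zero.mpr (Nat.factorial_ne_zero _)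
      push_cast
      field_simp
      ring
    · intro k hk
      obtain ⟨d, rfl⟩ : ∃ d, j = k + d := ⟨j - k, by omega⟩
      simp only [show 2 * (k + d) + 1 + 2 - 2 * (k + 1) = 2 * d + 1 from by omega,
        show 2 * (k + d) + 1 + 1 - 2 * (k + 1) = 2 * d from by omega,
        show 2 * (k + d) + 1 - 2 * k = 2 * d + 1 from by omega]
      simp only [show 2 * (k + d) + 1 + 2 = 2 * k + 2 * d + 1 + 1 + 1 from by omega,
        show 2 * (k + d) + 1 + 1 = 2 * k + 2 * d + 1 + 1 from by omega,
        show 2 * (k + d) + 1 = 2 * k + 2 * d + 1 from by omega]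
      simp only [Nat.factorial_succ]
      have h1 : ((Nat.factorial (2 * k + 2 * d + 1) : ℝ)) ≠ 0 :=
        Nat.cast_ne_zero.mpr (Nat.factorial_ne_zero _)
      have h2 : ((Nat.factorial k : ℝ)) ≠ 0 := Nat.cast_ne_zero.mpr (Nat.factorial_ne_zero _)
      have h3 : ((Nat.factorial (2 * d) : ℝ)) ≠ 0 := Nat.cast_ne_zero.mpr (Nat.factorial_ne_zero _)
      push_cast
      field_simp
      ring

lemma integrable_exp_gauss {c : ℝ} (b : ℝ) (hc : 0 < c) :
    Integrable (fun x : ℝ => Real.exp (-c * (x - b) ^ 2)) :=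
  (integrable_exp_neg_mul_sq hc).comp_sub_right b

lemma integrable_exp_lin_gauss (a : ℝ) {c : ℝ} (b : ℝ) (hc : 0 < c) :
    Integrable (fun x : ℝ => Real.exp (a * x) * Real.exp (-c * (x - b) ^ 2)) := by
  have key : (fun x : ℝ => Real.exp (a * x) * Real.exp (-c * (x - b) ^ 2)) =
      fun x => Real.exp (a * b + a ^ 2 / (4 * c)) *
        Real.exp (-c * (x - (b + a / (2 * c))) ^ 2) := by
    funext x
    rw [← Real.exp_add, ← Real.exp_add]
    congr 1
    field_simp
    ring
  rw [key]
  exact (integrable_exp_gauss _ hc).const_mul _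

lemma abs_pow_le_exps (n : ℕ) (x : ℝ) :
    |x| ^ n ≤ (Nat.factorial n : ℝ) * (Real.exp x + Real.exp (-x)) := by
  have h1 : |x| ^ n / (Nat.factorial n : ℝ) ≤ Real.exp |x| := by
    calc |x| ^ n / (Nat.factorial n : ℝ)
        ≤ ∑ i ∈ Finset.range (n + 1), |x| ^ i / (Nat.factorial i : ℝ) := by
          refine Finset.single_le_sum (f := fun i => |x| ^ i / (Nat.factorial i : ℝ)) ?_ ?_
          · intro i _; positivity
          · simp
      _ ≤ Real.exp |x| := Real.sum_le_exp_of_nonneg (abs_nonneg x) _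
  have h2 : Real.exp |x| ≤ Real.exp x + Real.exp (-x) := by
    rcases abs_cases x with ⟨h, _⟩ | ⟨h, _⟩
    · rw [h]; nlinarith [Real.exp_pos (-x)]
    · rw [h]; nlinarith [Real.exp_pos x]
  have hn : (0:ℝ) < (Nat.factorial n : ℝ) := by exact_mod_cast Nat.factorial_pos n
  calc |x| ^ n = (Nat.factorial n : ℝ) * (|x| ^ n / (Nat.factorial n : ℝ)) := by field_simp
    _ ≤ (Nat.factorial n : ℝ) * (Real.exp x + Real.exp (-x)) := by
        apply mul_le_mul_of_nonneg_left (h1.trans h2) hn.le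

lemma integrable_pow_gauss (n : ℕ) {c : ℝ} (b : ℝ) (hc : 0 < c) :
    Integrable (fun x : ℝ => x ^ n * Real.exp (-c * (x - b) ^ 2)) := by
  have hmeas : AEStronglyMeasurable (fun x : ℝ => x ^ n * Real.exp (-c * (x - b) ^ 2)) volume := by
    apply Continuous.aestronglyMeasurable; continuity
  refine Integrable.mono' (g := fun x : ℝ =>
      (Nat.factorial n : ℝ) * (Real.exp (1 * x) * Real.exp (-c * (x - b) ^ 2) +
        Real.exp ((-1) * x) * Real.exp (-c * (x - b) ^ 2))) ?_ hmeas ?_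
  · exact (((integrable_exp_lin_gauss 1 b hc).add
      (integrable_exp_lin_gauss (-1) b hc))).const_mul _
  · filter_upwards with x
    rw [Real.norm_eq_abs, abs_mul, abs_of_nonneg (Real.exp_pos _).le, abs_pow]
    have := abs_pow_le_exps n x
    have he : (0:ℝ) < Real.exp (-c * (x - b) ^ 2) := Real.exp_pos _
    calc |x| ^ n * Real.exp (-c * (x - b) ^ 2)
        ≤ ((Nat.factorial n : ℝ) * (Real.exp x + Real.exp (-x))) * Real.exp (-c * (x - b) ^ 2) :=
          mul_le_mul_of_nonneg_right this he.le
      _ = (Nat.factorial n : ℝ) * (Real.exp (1 * x) * Real.exp (-c * (x - b) ^ 2) +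
          Real.exp ((-1) * x) * Real.exp (-c * (x - b) ^ 2)) := by rw [one_mul, neg_one_mul]; ring

lemma tendsto_pow_gauss0 (n : ℕ) {c : ℝ} (hc : 0 < c) :
    Tendsto (fun x : ℝ => x ^ n * Real.exp (-c * x ^ 2)) (cocompact ℝ) (nhds 0) := by
  rw [tendsto_zero_iff_abs_tendsto_zero]
  have h := tendsto_rpow_abs_mul_exp_neg_mul_sq_cocompact hc n
  refine h.congr' ?_
  filter_upwards with x
  simp only [Function.comp_apply, abs_mul, abs_of_nonneg (Real.exp_pos _).le, abs_pow,
    Real.rpow_natCast]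

lemma tendsto_pow_gauss_shift (n : ℕ) {c : ℝ} (b : ℝ) (hc : 0 < c) {l : Filter ℝ}
    (hl : Tendsto (fun x : ℝ => x - b) l (cocompact ℝ)) :
    Tendsto (fun x : ℝ => x ^ n * Real.exp (-c * (x - b) ^ 2)) l (nhds 0) := by
  have hF : Tendsto (fun u : ℝ => (u + b) ^ n * Real.exp (-c * u ^ 2)) (cocompact ℝ) (nhds 0) := by
    have key : (fun u : ℝ => (u + b) ^ n * Real.exp (-c * u ^ 2)) =
        fun u => ∑ i ∈ Finset.range (n + 1),
          (b ^ (n - i) * (n.choose i : ℝ)) * (u ^ i * Real.exp (-c * u ^ 2)) := by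
      funext u
      rw [add_pow, Finset.sum_mul]
      refine Finset.sum_congr rfl fun i _ => by ring
    rw [key]
    have := tendsto_finset_sum (Finset.range (n + 1))
      (fun i _ => ((tendsto_pow_gauss0 i hc).const_mul (b ^ (n - i) * (n.choose i : ℝ))))
    simpa using this
  have := hF.comp hl
  refine this.congr fun x => ?_
  simp only [Function.comp]
  rw [sub_add_cancel]

lemma sub_tendsto_atTop (b : ℝ) : Tendsto (fun x : ℝ => x - b) atTop (cocompact ℝ) := by
  refine Tendsto.mono_right ?_ _root_.atTop_le_cocompact
  simpa [sub_eq_add_neg] using tendsto_atTop_add_const_right atTop (-b) tendsto_id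

lemma sub_tendsto_atBot (b : ℝ) : Tendsto (fun x : ℝ => x - b) atBot (cocompact ℝ) := by
  refine Tendsto.mono_right ?_ _root_.atBot_le_cocompact
  simpa [sub_eq_add_neg] using tendsto_atBot_add_const_right atBot (-b) tendsto_id

lemma integral_deriv_zero (f f' : ℝ → ℝ) (hd : ∀ x, HasDerivAt f (f' x) x)
    (hi : Integrable f') (htop : Tendsto f atTop (nhds 0))
    (hbot : Tendsto f atBot (nhds 0)) : ∫ x, f' x = 0 := by
  have h1 := MeasureTheory.integral_Ioi_of_hasDerivAt_of_tendsto' (a := 0)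
    (fun x _ => hd x) hi.integrableOn htop
  have h2 := MeasureTheory.integral_Iic_of_hasDerivAt_of_tendsto' (a := 0)
    (fun x _ => hd x) hi.integrableOn hbot
  rw [← intervalIntegral.integral_Iic_add_Ioi hi.integrableOn hi.integrableOn, h1, h2]
  ring

lemma rep (m p : ℕ) (c b : ℝ) :
    (fun τ : ℝ => τ ^ p * Real.exp (-c * (τ - b) ^ 2) * hermitePoly m τ) =
      fun τ => ∑ k ∈ Finset.range (m / 2 + 1),
        ((Nat.factorial m : ℝ) * ((-1) ^ k / ((Nat.factorial k : ℝ) *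
            (Nat.factorial (m - 2 * k) : ℝ))) * 2 ^ (m - 2 * k)) *
          (τ ^ (m - 2 * k + p) * Real.exp (-c * (τ - b) ^ 2)) := by
  funext τ
  rw [hermitePoly, Finset.mul_sum, Finset.mul_sum]
  refine Finset.sum_congr rfl fun k _ => ?_
  rw [mul_pow, pow_add]
  ring

lemma int_herm (m p : ℕ) {c : ℝ} (b : ℝ) (hc : 0 < c) :
    Integrable (fun τ : ℝ => τ ^ p * Real.exp (-c * (τ - b) ^ 2) * hermitePoly m τ) := by
  rw [rep]
  exact integrable_finset_sum _ fun k _ => (integrable_pow_gauss _ b hc).const_mul _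

lemma tendsto_herm (m : ℕ) {c : ℝ} (b : ℝ) (hc : 0 < c) {l : Filter ℝ}
    (hl : Tendsto (fun x : ℝ => x - b) l (cocompact ℝ)) :
    Tendsto (fun τ : ℝ => Real.exp (-c * (τ - b) ^ 2) * hermitePoly m τ) l (nhds 0) := by
  have h0 : (fun τ : ℝ => Real.exp (-c * (τ - b) ^ 2) * hermitePoly m τ) =
      fun τ : ℝ => τ ^ 0 * Real.exp (-c * (τ - b) ^ 2) * hermitePoly m τ := by
    funext τ; ring
  rw [h0, rep]
  have := tendsto_finset_sum (Finset.range (m / 2 + 1))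
    (fun k (_ : k ∈ Finset.range (m / 2 + 1)) =>
      (tendsto_pow_gauss_shift (m - 2 * k + 0) b hc hl).const_mul
        ((Nat.factorial m : ℝ) * ((-1) ^ k / ((Nat.factorial k : ℝ) *
          (Nat.factorial (m - 2 * k) : ℝ))) * 2 ^ (m - 2 * k)))
  simpa using this

lemma hasDerivAt_g (c b τ : ℝ) :
    HasDerivAt (fun y : ℝ => Real.exp (-c * (y - b) ^ 2))
      ((-2 * c * (τ - b)) * Real.exp (-c * (τ - b) ^ 2)) τ := by
  have hid : HasDerivAt (fun y : ℝ => y) 1 τ := hasDerivAt_id τ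
  have h := (((hid.sub_const b).pow 2).const_mul (-c)).exp
  simp only [Pi.pow_apply] at h
  convert h using 1
  norm_num
  ring

lemma key_step (m : ℕ) {c : ℝ} (b : ℝ) (hc : 0 < c) :
    (-2 * c) * (∫ τ : ℝ, τ ^ 1 * Real.exp (-c * (τ - b) ^ 2) * hermitePoly (m + 1) τ) +
      (2 * c * b) * (∫ τ : ℝ, τ ^ 0 * Real.exp (-c * (τ - b) ^ 2) * hermitePoly (m + 1) τ) +
      (2 * (m + 1)) * (∫ τ : ℝ, τ ^ 0 * Real.exp (-c * (τ - b) ^ 2) * hermitePoly m τ) = 0 := by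
  have hint1 := (int_herm (m + 1) 1 b hc).const_mul (-2 * c)
  have hint2 := (int_herm (m + 1) 0 b hc).const_mul (2 * c * b)
  have hint3 := (int_herm m 0 b hc).const_mul ((2 : ℝ) * (m + 1))
  set f' : ℝ → ℝ := fun τ =>
    (-2 * c) * (τ ^ 1 * Real.exp (-c * (τ - b) ^ 2) * hermitePoly (m + 1) τ) +
      ((2 * c * b) * (τ ^ 0 * Real.exp (-c * (τ - b) ^ 2) * hermitePoly (m + 1) τ) +
        (2 * (m + 1)) * (τ ^ 0 * Real.exp (-c * (τ - b) ^ 2) * hermitePoly m τ)) with hf'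
  have hd : ∀ τ, HasDerivAt (fun y => Real.exp (-c * (y - b) ^ 2) * hermitePoly (m + 1) y)
      (f' τ) τ := by
    intro τ
    have h := (hasDerivAt_g c b τ).fun_mul (hermitePoly_hasDerivAt m τ)
    convert h using 1
    case e'_4 => rfl
    case e'_5 => rfl
    rw [hf']
    ring
  have hint23 : Integrable (fun τ : ℝ =>
      (2 * c * b) * (τ ^ 0 * Real.exp (-c * (τ - b) ^ 2) * hermitePoly (m + 1) τ) +
        (2 * (m + 1)) * (τ ^ 0 * Real.exp (-c * (τ - b) ^ 2) * hermitePoly m τ)) volume :=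
    hint2.add hint3
  have hzero : ∫ τ, f' τ = 0 :=
    integral_deriv_zero _ _ hd (hint1.add hint23)
      (tendsto_herm (m + 1) b hc (sub_tendsto_atTop b))
      (tendsto_herm (m + 1) b hc (sub_tendsto_atBot b))
  rw [hf'] at hzero
  rw [integral_add hint1 hint23, integral_add hint2 hint3,
    integral_const_mul, integral_const_mul, integral_const_mul] at hzero
  linarith

lemma key_base {c : ℝ} (b : ℝ) (hc : 0 < c) :
    (-2 * c) * (∫ τ : ℝ, τ ^ 1 * Real.exp (-c * (τ - b) ^ 2)) +
      (2 * c * b) * (∫ τ : ℝ, Real.exp (-c * (τ - b) ^ 2)) = 0 := by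
  have hint1 := (integrable_pow_gauss 1 b hc).const_mul (-2 * c)
  have hint2 := (integrable_exp_gauss b hc).const_mul (2 * c * b)
  set f' : ℝ → ℝ := fun τ =>
    (-2 * c) * (τ ^ 1 * Real.exp (-c * (τ - b) ^ 2)) +
      (2 * c * b) * Real.exp (-c * (τ - b) ^ 2) with hf'
  have hd : ∀ τ, HasDerivAt (fun y : ℝ => Real.exp (-c * (y - b) ^ 2)) (f' τ) τ := by
    intro τ
    have h := hasDerivAt_g c b τ
    convert h using 1
    rw [hf']
    ring
  have htop : Tendsto (fun y : ℝ => Real.exp (-c * (y - b) ^ 2)) atTop (nhds 0) := by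
    have := tendsto_pow_gauss_shift 0 b hc (sub_tendsto_atTop b)
    simpa using this
  have hbot : Tendsto (fun y : ℝ => Real.exp (-c * (y - b) ^ 2)) atBot (nhds 0) := by
    have := tendsto_pow_gauss_shift 0 b hc (sub_tendsto_atBot b)
    simpa using this
  have hzero : ∫ τ, f' τ = 0 :=
    integral_deriv_zero _ _ hd (hint1.add hint2) htop hbot
  rw [hf'] at hzero
  rw [integral_add hint1 hint2, integral_const_mul, integral_const_mul] at hzero
  linarith

lemma J0 {c : ℝ} (b : ℝ) (hc : 0 < c) :
    ∫ τ : ℝ, Real.exp (-c * (τ - b) ^ 2) = Real.sqrt (π / c) := by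
  have h := integral_sub_right_eq_self (μ := volume) (fun u : ℝ => Real.exp (-c * u ^ 2)) b
  calc ∫ τ : ℝ, Real.exp (-c * (τ - b) ^ 2) = ∫ τ : ℝ, Real.exp (-c * τ ^ 2) := h
    _ = Real.sqrt (π / c) := integral_gaussian c

lemma rpow_succ_half (y : ℝ) :
    (3 : ℝ) ^ (-(y + 1) / 2) = (3 : ℝ) ^ (-y / 2) / Real.sqrt 3 := by
  rw [show -(y + 1) / 2 = -y / 2 + -(1 / 2) by ring,
    Real.rpow_add (by norm_num : (0:ℝ) < 3),
    Real.rpow_neg (by norm_num : (0:ℝ) ≤ 3), ← Real.sqrt_eq_rpow]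
  ring

lemma Jval (t : ℝ) (m : ℕ) :
    ∫ τ : ℝ, Real.exp (-(3 / 2 : ℝ) * (τ - 2 * t / 3) ^ 2) * hermitePoly m τ =
      Real.sqrt (2 * π / 3) * (3 : ℝ) ^ (-(m : ℝ) / 2) *
        hermitePoly m (2 * t / Real.sqrt 3) := by
  have hc : (0:ℝ) < 3 / 2 := by norm_num
  have hs3 : Real.sqrt 3 * Real.sqrt 3 = 3 := Real.mul_self_sqrt (by norm_num)
  have hs3pos : (0:ℝ) < Real.sqrt 3 := Real.sqrt_pos.mpr (by norm_num)
  induction m using Nat.strong_induction_on with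
  | _ m ih =>
  match m with
  | 0 =>
    simp only [hermitePoly_zero, mul_one]
    rw [J0 (2 * t / 3) hc]
    rw [show ((-(0:ℕ) : ℝ) / 2 : ℝ) = 0 by norm_num]
    simp only [Nat.cast_zero, neg_zero, zero_div, Real.rpow_zero, mul_one]
    rw [show π / (3/2 : ℝ) = 2 * π / 3 by ring]
  | 1 =>
    have hb := key_base (c := 3/2) (2 * t / 3) hc
    rw [J0 (2 * t / 3) hc] at hb
    have hrw : (fun τ : ℝ => Real.exp (-(3 / 2 : ℝ) * (τ - 2 * t / 3) ^ 2) * hermitePoly 1 τ) =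
        fun τ => 2 * (τ ^ 1 * Real.exp (-(3 / 2 : ℝ) * (τ - 2 * t / 3) ^ 2)) := by
      funext τ; rw [hermitePoly_one]; ring
    rw [hrw, integral_const_mul]
    have hI1 : (∫ τ : ℝ, τ ^ 1 * Real.exp (-(3/2 : ℝ) * (τ - 2 * t / 3) ^ 2)) =
        (2 * t / 3) * Real.sqrt (π / (3/2)) := by linarith
    rw [hI1, hermitePoly_one]
    rw [show ((-(1:ℕ) : ℝ) / 2 : ℝ) = -(0 + 1) / 2 by norm_num]
    rw [rpow_succ_half, show (-(0:ℝ) / 2) = 0 by norm_num, Real.rpow_zero]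
    rw [show π / (3/2 : ℝ) = 2 * π / 3 by ring]
    field_simp
    ring
    rw [Real.sq_sqrt (by norm_num : (0:ℝ) ≤ 3)]
  | (m + 2) =>
    have ih1 := ih (m + 1) (by omega)
    have ih0 := ih m (by omega)
    have hks := key_step m (c := 3/2) (2 * t / 3) hc
    have hrw : (fun τ : ℝ =>
        Real.exp (-(3 / 2 : ℝ) * (τ - 2 * t / 3) ^ 2) * hermitePoly (m + 2) τ) =
        fun τ => 2 * (τ ^ 1 * Real.exp (-(3 / 2 : ℝ) * (τ - 2 * t / 3) ^ 2) *
            hermitePoly (m + 1) τ) -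
          (2 * ((m : ℝ) + 1)) * (τ ^ 0 * Real.exp (-(3 / 2 : ℝ) * (τ - 2 * t / 3) ^ 2) *
            hermitePoly m τ) := by
      funext τ; rw [hermitePoly_rec]; ring
    rw [hrw, integral_sub ((int_herm (m+1) 1 _ hc).const_mul 2)
      ((int_herm m 0 _ hc).const_mul _), integral_const_mul, integral_const_mul]
    simp only [pow_zero, pow_one, one_mul] at hks ⊢
    rw [ih1, ih0] at hks
    rw [ih0]
    push_cast at hks ⊢
    rw [rpow_succ_half ((m:ℝ))] at hks
    have hI1 : (∫ τ : ℝ, τ * Real.exp (-(3/2 : ℝ) * (τ - 2 * t / 3) ^ 2) *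
        hermitePoly (m + 1) τ) =
        (2 * t / 3) * (Real.sqrt (2 * π / 3) * ((3 : ℝ) ^ (-(m : ℝ) / 2) / Real.sqrt 3) *
            hermitePoly (m + 1) (2 * t / Real.sqrt 3)) +
          (2 * ((m:ℝ) + 1) / 3) * (Real.sqrt (2 * π / 3) * (3 : ℝ) ^ (-(m : ℝ) / 2) *
            hermitePoly m (2 * t / Real.sqrt 3)) := by
      linarith
    rw [hermitePoly_rec m (2 * t / Real.sqrt 3)]
    rw [show (-((m:ℝ) + 2) / 2 : ℝ) = -(((m:ℝ) + 1) + 1) / 2 by ring, rpow_succ_half ((m:ℝ) + 1),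
      rpow_succ_half ((m:ℝ))]
    rw [div_div, hs3, hI1]
    have h2 : Real.sqrt 3 ^ 2 = 3 := Real.sq_sqrt (by norm_num)
    have h4 : Real.sqrt 3 ^ 4 = 9 := by
      rw [show (4:ℕ) = 2 * 2 from rfl, pow_mul, h2]; norm_num
    field_simp
    ring_nf

/-- Gaussian–Hermite convolution identity:
`∫ℝ e^{−(t−τ)²} e^{−τ²/2} H_m(τ) dτ = √(2π/3) 3^{−m/2} e^{−t²/3} H_m(2t/√3)`. -/
theorem gaussian_hermite_integral (m : ℕ) (t : ℝ) :
    Integrable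
        (fun τ : ℝ => Real.exp (-(t - τ) ^ 2) * Real.exp (-τ ^ 2 / 2) * hermitePoly m τ) ∧
      ∫ τ : ℝ, Real.exp (-(t - τ) ^ 2) * Real.exp (-τ ^ 2 / 2) * hermitePoly m τ =
        Real.sqrt (2 * Real.pi / 3) * (3 : ℝ) ^ (-(m : ℝ) / 2) * Real.exp (-t ^ 2 / 3) *
          hermitePoly m (2 * t / Real.sqrt 3) := by
  have hc : (0:ℝ) < 3 / 2 := by norm_num
  have hw : (fun τ : ℝ => Real.exp (-(t - τ) ^ 2) * Real.exp (-τ ^ 2 / 2) * hermitePoly m τ) =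
      fun τ => Real.exp (-t ^ 2 / 3) *
        (Real.exp (-(3 / 2 : ℝ) * (τ - 2 * t / 3) ^ 2) * hermitePoly m τ) := by
    funext τ
    rw [show Real.exp (-(t - τ) ^ 2) * Real.exp (-τ ^ 2 / 2) =
        Real.exp (-t ^ 2 / 3) * Real.exp (-(3 / 2 : ℝ) * (τ - 2 * t / 3) ^ 2) from by
      rw [← Real.exp_add, ← Real.exp_add]; congr 1; ring]
    rw [mul_assoc]
  constructor
  · rw [hw]
    have hint : Integrable
        (fun τ : ℝ => Real.exp (-(3 / 2 : ℝ) * (τ - 2 * t / 3) ^ 2) * hermitePoly m τ) := by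
      have := int_herm m 0 (2 * t / 3) hc
      simpa using this
    exact hint.const_mul _
  · rw [hw, integral_const_mul, Jval]
    ring
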